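/- For the almost-clique A_ℓ, the fractional hypertree width is at most (ℓ−1)/2: the tree decomposition with two bags {x_1, x_2, …, x_{k+1}} and {x_2, …, x_ℓ} has each bag admitting a fractional edge cover of weight at most (ℓ−1)/2. -/

import Mathlib

open Finset

structure Hypergraph' (V : Type*) [DecidableEq V] [Fintype V] where
  edges : Finset (Finset V)

namespace Hypergraph'

variable {V : Type*} [DecidableEq V] [Fintype V]

/-- Two vertex sets touch in `H`: they intersect, or some hyperedge meets both. -/
def touch (H : Hypergraph' V) (S T : Finset V) : Prop :=
  (S ∩ T).Nonempty ∨ ∃ e ∈ H.edges, (e ∩ S).Nonempty ∧ (e ∩ T).Nonempty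

/-- `S` induces a connected subhypergraph of `H`. -/
def connSet (H : Hypergraph' V) (S : Finset V) : Prop :=
  ∀ a ∈ S, ∀ b ∈ S,
    Relation.ReflTransGen (fun x y => x ∈ S ∧ y ∈ S ∧ ∃ e ∈ H.edges, x ∈ e ∧ y ∈ e) a b

/-- An embedding of the `k`-clique into the hypergraph `H`. -/
def IsCliqueEmb (H : Hypergraph' V) (k : ℕ) (ψ : Fin k → Finset V) : Prop :=
  (∀ i, (ψ i).Nonempty) ∧ (∀ i, H.connSet (ψ i)) ∧
    ∀ i j : Fin k, i ≠ j → H.touch (ψ i) (ψ j)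

/-- The weak edge depth of an embedding: the max over hyperedges `e` of the number
of clique vertices whose image meets `e`. -/
def wedOf (H : Hypergraph' V) {k : ℕ} (ψ : Fin k → Finset V) : ℕ :=
  H.edges.sup fun e => (Finset.univ.filter fun i : Fin k => ((ψ i) ∩ e).Nonempty).card

/-- `wed (C_k ↦ H)`: the minimum weak edge depth over embeddings of the `k`-clique. -/
noncomputable def wed (H : Hypergraph' V) (k : ℕ) : ℕ :=
  sInf {w | ∃ ψ : Fin k → Finset V, H.IsCliqueEmb k ψ ∧ H.wedOf ψ ≤ w}

end Hypergraph'

/-- A tree decomposition of a hypergraph. -/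
structure IsTreeDecomp {V : Type*} [DecidableEq V] [Fintype V] {ι : Type*}
    (H : Hypergraph' V) (T : SimpleGraph ι) (χ : ι → Finset V) : Prop where
  tree : T.IsTree
  covers : ∀ e ∈ H.edges, ∃ t, e ⊆ χ t
  conn : ∀ v : V, (T.induce {t | v ∈ χ t}).Connected

/-- The almost-clique `A_ℓ`: vertices `x_1 = 0, …, x_ℓ = ℓ-1`; the vertices
`1, …, ℓ-1` form a clique and vertex `0` is adjacent exactly to `1, …, k`. -/
def almostClique (ℓ k : ℕ) : SimpleGraph (Fin ℓ) where
  Adj i j := i ≠ j ∧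
    (((i : ℕ) ≠ 0 ∧ (j : ℕ) ≠ 0) ∨ ((i : ℕ) = 0 ∧ (j : ℕ) ≤ k) ∨
      ((j : ℕ) = 0 ∧ (i : ℕ) ≤ k))
  symm := by
    constructor
    rintro a b ⟨h1, h2⟩
    exact ⟨h1.symm, by tauto⟩
  loopless := by
    constructor
    rintro a ⟨h, _⟩
    exact h rfl

open scoped Classical in
/-- A graph viewed as a hypergraph whose hyperedges are its edges. -/
noncomputable def graphHG {W : Type*} [DecidableEq W] [Fintype W]
    (G : SimpleGraph W) : Hypergraph' W :=
  ⟨Finset.univ.filter fun e : Finset W => ∃ u v : W, G.Adj u v ∧ e = {u, v}⟩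

/-- `w` is a fractional edge cover of the vertex set `S` in `H`, assigning
nonnegative weights to hyperedges so every vertex of `S` is covered with total
weight at least 1. -/
def IsFracCover {W : Type*} [DecidableEq W] [Fintype W] (H : Hypergraph' W)
    (S : Finset W) (w : Finset W → ℝ) : Prop :=
  (∀ e, 0 ≤ w e) ∧ (∀ e ∉ H.edges, w e = 0) ∧
    ∀ v ∈ S, 1 ≤ ∑ e ∈ H.edges, (if v ∈ e then w e else 0)

/-- For the almost-clique `A_ℓ`, the tree decomposition with the two bags
`{x_1, …, x_{k+1}}` and `{x_2, …, x_ℓ}` witnesses `fhw(A_ℓ) ≤ (ℓ−1)/2`: each bag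
admits a fractional edge cover of total weight at most `(ℓ−1)/2`. -/
lemma clique_cover {W : Type*} [DecidableEq W] [Fintype W] (G : SimpleGraph W)
    (S : Finset W) (h2 : 2 ≤ S.card)
    (hcl : ∀ u ∈ S, ∀ v ∈ S, u ≠ v → G.Adj u v) :
    ∃ w : Finset W → ℝ, IsFracCover (graphHG G) S w ∧
      ∑ e ∈ (graphHG G).edges, w e = (S.card : ℝ) / 2 := by
  classical
  set n := S.card with hn
  have hmem : ∀ e : Finset W, e ∈ (graphHG G).edges ↔ ∃ u v : W, G.Adj u v ∧ e = {u, v} := by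
    intro e; simp [graphHG]
  have hc0 : (0:ℝ) < (n:ℝ) - 1 := by
    have : (2:ℝ) ≤ (n:ℝ) := by exact_mod_cast h2
    linarith
  set c : ℝ := ((n:ℝ) - 1)⁻¹ with hc
  have hcpos : 0 < c := inv_pos.mpr hc0
  -- key set identity
  have hA : ∀ e : Finset W, (e ∈ (graphHG G).edges ∧ e ⊆ S) ↔ e ∈ S.powersetCard 2 := by
    intro e
    rw [Finset.mem_powersetCard]
    constructor
    · rintro ⟨he, hsub⟩
      obtain ⟨u, v, huv, rfl⟩ := (hmem _).1 he
      exact ⟨hsub, Finset.card_pair huv.ne⟩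
    · rintro ⟨hsub, hcard⟩
      obtain ⟨u, v, huv, rfl⟩ := Finset.card_eq_two.1 hcard
      have hu : u ∈ S := hsub (by simp)
      have hv : v ∈ S := hsub (by simp)
      exact ⟨(hmem _).2 ⟨u, v, hcl u hu v hv huv, rfl⟩, hsub⟩
  refine ⟨fun e => if e ∈ (graphHG G).edges ∧ e ⊆ S then c else 0, ⟨?_, ?_, ?_⟩, ?_⟩
  · intro e; dsimp only; split <;> [exact hcpos.le; rfl]
  · intro e he; dsimp only; rw [if_neg]; tauto
  · intro v hv
    have hsum : ∑ e ∈ (graphHG G).edges,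
        (if v ∈ e then (if e ∈ (graphHG G).edges ∧ e ⊆ S then c else 0) else 0)
        = ∑ e ∈ ((graphHG G).edges.filter fun e => v ∈ e ∧ e ⊆ S), c := by
      rw [Finset.sum_filter]
      apply Finset.sum_congr rfl
      intro e he
      by_cases h1 : v ∈ e <;> by_cases h2 : e ⊆ S <;> simp [h1, h2, he]
    rw [hsum, Finset.sum_const]
    -- identify the filter with an image
    have himg : ((graphHG G).edges.filter fun e => v ∈ e ∧ e ⊆ S)
        = (S.erase v).image (fun u => ({v, u} : Finset W)) := by
      ext e
      simp only [Finset.mem_filter, Finset.mem_image, Finset.mem_erase]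
      constructor
      · rintro ⟨he, hve, hsub⟩
        have he2 : e ∈ S.powersetCard 2 := (hA e).1 ⟨he, hsub⟩
        rw [Finset.mem_powersetCard] at he2
        obtain ⟨a, b, hab, rfl⟩ := Finset.card_eq_two.1 he2.2
        rcases Finset.mem_insert.1 hve with rfl | hvb
        · exact ⟨b, ⟨Ne.symm hab, he2.1 (by simp)⟩, rfl⟩
        · rw [Finset.mem_singleton] at hvb
          subst hvb
          exact ⟨a, ⟨hab, he2.1 (by simp)⟩, (Finset.pair_comm v a)⟩
      · rintro ⟨u, ⟨huv, hu⟩, rfl⟩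
        have : ({v, u} : Finset W) ⊆ S := by
          intro x hx
          rcases Finset.mem_insert.1 hx with rfl | hx
          · exact hv
          · rw [Finset.mem_singleton] at hx; subst hx; exact hu
        exact ⟨((hA _).2 (Finset.mem_powersetCard.2 ⟨this,
          Finset.card_pair (Ne.symm huv)⟩)).1, by simp, this⟩
    have hinj : Set.InjOn (fun u => ({v, u} : Finset W)) (S.erase v) := by
      intro a ha b hb hab
      dsimp only at hab
      have hav : a ≠ v := (Finset.mem_erase.1 ha).1
      have : a ∈ ({v, b} : Finset W) := by rw [← hab]; simp
      rcases Finset.mem_insert.1 this with h | h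
      · exact absurd h hav
      · exact Finset.mem_singleton.1 h
    rw [himg, Finset.card_image_of_injOn hinj, Finset.card_erase_of_mem hv]
    have hcast : ((n - 1 : ℕ) : ℝ) = (n:ℝ) - 1 := by
      have : 1 ≤ n := le_trans (by norm_num) h2
      push_cast [this]; ring
    rw [nsmul_eq_mul, hcast, hc, mul_inv_cancel₀ (ne_of_gt hc0)]
  · have hfil : ((graphHG G).edges.filter fun e => e ⊆ S) = S.powersetCard 2 := by
      ext e
      rw [Finset.mem_filter]
      exact hA e
    have : ∑ e ∈ (graphHG G).edges,
        (if e ∈ (graphHG G).edges ∧ e ⊆ S then c else 0)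
        = ∑ e ∈ ((graphHG G).edges.filter fun e => e ⊆ S), c := by
      rw [Finset.sum_filter]
      apply Finset.sum_congr rfl
      intro e he
      by_cases h2' : e ⊆ S <;> simp [he, h2']
    rw [this, hfil, Finset.sum_const, Finset.card_powersetCard, nsmul_eq_mul,
      Nat.cast_choose_two, hc]
    field_simp
    ring

lemma top_fin2_isTree : (⊤ : SimpleGraph (Fin 2)).IsTree := by
  constructor
  · constructor
    intro a b
    by_cases h : a = b
    · exact h ▸ SimpleGraph.Reachable.refl a
    · exact SimpleGraph.Adj.reachable h
  · intro v c hc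
    have h3 := hc.three_le_length
    have hnd := hc.2
    have hcard := List.Nodup.length_le_card hnd
    have hlen : c.support.tail.length = c.length := by
      simp [SimpleGraph.Walk.length_support]
    simp only [Fintype.card_fin] at hcard
    omega

theorem almostClique_fhw_bound' (ℓ k : ℕ) (hk : 1 ≤ k) (hkℓ : k < ℓ - 1) :
    ∃ χ : Fin 2 → Finset (Fin ℓ),
      χ 0 = Finset.univ.filter (fun i : Fin ℓ => (i : ℕ) ≤ k) ∧
      χ 1 = Finset.univ.filter (fun i : Fin ℓ => (i : ℕ) ≠ 0) ∧
      IsTreeDecomp (graphHG (almostClique ℓ k)) (⊤ : SimpleGraph (Fin 2)) χ ∧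
      ∀ t : Fin 2, ∃ w : Finset (Fin ℓ) → ℝ,
        IsFracCover (graphHG (almostClique ℓ k)) (χ t) w ∧
        ∑ e ∈ (graphHG (almostClique ℓ k)).edges, w e ≤ ((ℓ : ℝ) - 1) / 2 := by
  classical
  have hℓ3 : 3 ≤ ℓ := by omega
  haveI : NeZero ℓ := ⟨by omega⟩
  have hk1ℓ : k + 1 < ℓ := by omega
  set G := almostClique ℓ k with hG
  set A : Finset (Fin ℓ) := Finset.univ.filter (fun i : Fin ℓ => (i : ℕ) ≤ k) with hA
  set B : Finset (Fin ℓ) := Finset.univ.filter (fun i : Fin ℓ => (i : ℕ) ≠ 0) with hB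
  have hmemA : ∀ i : Fin ℓ, i ∈ A ↔ (i : ℕ) ≤ k := by intro i; simp [hA]
  have hmemB : ∀ i : Fin ℓ, i ∈ B ↔ (i : ℕ) ≠ 0 := by intro i; simp [hB]
  have hAcard : A.card = k + 1 := by
    apply Finset.card_eq_of_bijective (fun i hi => (⟨i, by omega⟩ : Fin ℓ))
    · intro a ha
      have : (a : ℕ) ≤ k := (hmemA a).1 ha
      exact ⟨a, by omega, Fin.ext rfl⟩
    · intro i hi
      rw [hmemA]
      simp
      omega
    · intro i j hi hj h
      simpa using congrArg Fin.val h
  have hBcard : B.card = ℓ - 1 := by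
    have : B = Finset.univ.erase (0 : Fin ℓ) := by
      ext i
      rw [hmemB, Finset.mem_erase]
      simp only [Finset.mem_univ, and_true, Ne, Fin.ext_iff, Fin.val_zero]
    rw [this, Finset.card_erase_of_mem (Finset.mem_univ _), Finset.card_univ,
      Fintype.card_fin]
  refine ⟨![A, B], rfl, rfl, ⟨top_fin2_isTree, ?_, ?_⟩, ?_⟩
  · -- covers
    intro e he
    have : ∃ u v : Fin ℓ, G.Adj u v ∧ e = {u, v} := by simpa [graphHG] using he
    obtain ⟨u, v, huv, rfl⟩ := this
    obtain ⟨hne, hcases⟩ := huv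
    have hsub : ∀ (S : Finset (Fin ℓ)), u ∈ S → v ∈ S → {u, v} ⊆ S := by
      intro S hu hv
      rw [Finset.insert_subset_iff, Finset.singleton_subset_iff]
      exact ⟨hu, hv⟩
    rcases hcases with ⟨hu, hv⟩ | ⟨hu, hv⟩ | ⟨hv, hu⟩
    · exact ⟨1, by simpa using hsub B ((hmemB u).2 hu) ((hmemB v).2 hv)⟩
    · exact ⟨0, by simpa using hsub A ((hmemA u).2 (by omega)) ((hmemA v).2 hv)⟩
    · exact ⟨0, by simpa using hsub A ((hmemA u).2 hu) ((hmemA v).2 (by omega))⟩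
  · -- conn
    intro v
    have hne : ∃ t : Fin 2, v ∈ ![A, B] t := by
      by_cases h : (v : ℕ) = 0
      · exact ⟨0, by simpa using (hmemA v).2 (by omega)⟩
      · exact ⟨1, by simpa using (hmemB v).2 h⟩
    haveI : Nonempty ↑{t | v ∈ ![A, B] t} := ⟨⟨hne.choose, hne.choose_spec⟩⟩
    refine ⟨fun a b => ?_⟩
    by_cases hab : a = b
    · exact hab ▸ SimpleGraph.Reachable.refl a
    · apply SimpleGraph.Adj.reachable
      exact fun h => hab (Subtype.ext h)
  · -- fractional covers
    intro t
    fin_cases t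
    · have hclA : ∀ u ∈ A, ∀ v ∈ A, u ≠ v → G.Adj u v := by
        intro u hu v hv huv
        rw [hmemA] at hu hv
        have : (u : ℕ) ≠ (v : ℕ) := fun h => huv (Fin.ext h)
        exact ⟨huv, by omega⟩
      obtain ⟨w, hw, hsum⟩ := clique_cover G A (by omega) hclA
      refine ⟨w, by simpa using hw, ?_⟩
      rw [hsum, hAcard]
      have : (k : ℝ) + 1 ≤ (ℓ : ℝ) - 1 := by
        have : (k : ℝ) + 1 + 1 ≤ (ℓ : ℝ) := by exact_mod_cast hk1ℓ
        linarith
      push_cast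
      linarith
    · have hclB : ∀ u ∈ B, ∀ v ∈ B, u ≠ v → G.Adj u v := by
        intro u hu v hv huv
        rw [hmemB] at hu hv
        exact ⟨huv, Or.inl ⟨hu, hv⟩⟩
      obtain ⟨w, hw, hsum⟩ := clique_cover G B (by omega) hclB
      refine ⟨w, by simpa using hw, ?_⟩
      rw [hsum, hBcard]
      rw [Nat.cast_sub (by omega)]
      simp


theorem almostClique_fhw_bound (ℓ k : ℕ) (hk : 1 ≤ k) (hkℓ : k < ℓ - 1) :
    ∃ χ : Fin 2 → Finset (Fin ℓ),
      χ 0 = Finset.univ.filter (fun i : Fin ℓ => (i : ℕ) ≤ k) ∧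
      χ 1 = Finset.univ.filter (fun i : Fin ℓ => (i : ℕ) ≠ 0) ∧
      IsTreeDecomp (graphHG (almostClique ℓ k)) (⊤ : SimpleGraph (Fin 2)) χ ∧
      ∀ t : Fin 2, ∃ w : Finset (Fin ℓ) → ℝ,
        IsFracCover (graphHG (almostClique ℓ k)) (χ t) w ∧
        ∑ e ∈ (graphHG (almostClique ℓ k)).edges, w e ≤ ((ℓ : ℝ) - 1) / 2 := by
  exact almostClique_fhw_bound' ℓ k hk hkℓ
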